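/- Optimal redistribution in scenario reduction: fix a discrete measure P = ∑_{i=1}^N p_i δ_{ω_i} and a nonempty proper subset J ⊂ {1,...,N} of deleted scenarios. Among all probability weights q on {1,...,N} \ J, the minimum of the transport cost to move P onto the remaining scenarios equals D_J = ∑_{i ∈ J} p_i · min_{j ∉ J} c(ω_i, ω_j), achieved by q_j = p_j + ∑_{i ∈ J, j(i)=j} p_i where j(i) ∈ argmin_{j ∉ J} c(ω_i, ω_j). -/
import Mathlib


theorem stmt_19 {Ω : Type*} (N : ℕ) (ω : Fin N → Ω)
    (p : Fin N → ℝ) (hp : ∀ i, 0 ≤ p i) (hp1 : ∑ i, p i = 1)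
    (c : Fin N → Fin N → ℝ) (hc0 : ∀ i j, 0 ≤ c i j)
    (hsym : ∀ i j, c i j = c j i) (hdiag : ∀ i, c i i = 0)
    (htri : ∀ i j k, c i j ≤ c i k + c k j)
    (J : Finset (Fin N)) (hJne : J.Nonempty) (hJprop : J ≠ Finset.univ)
    (hJc : (Jᶜ : Finset (Fin N)).Nonempty)
    (jsel : Fin N → Fin N)
    (hjsel : ∀ i ∈ J, jsel i ∈ Jᶜ ∧ ∀ j ∈ Jᶜ, c i (jsel i) ≤ c i j) :
    IsLeast {t : ℝ | ∃ (q : Fin N → ℝ) (η : Fin N → Fin N → ℝ),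
        (∀ j ∈ J, q j = 0) ∧ (∀ j, 0 ≤ q j) ∧ (∑ j, q j = 1) ∧
        (∀ i j, 0 ≤ η i j) ∧ (∀ i, ∑ j, η i j = p i) ∧ (∀ j, ∑ i, η i j = q j) ∧
        t = ∑ i, ∑ j, c i j * η i j}
      (∑ i ∈ J, p i * Jᶜ.inf' hJc (fun j => c i j)) ∧
    (∃ η : Fin N → Fin N → ℝ,
        (∀ i j, 0 ≤ η i j) ∧ (∀ i, ∑ j, η i j = p i) ∧
        (∀ j, ∑ i, η i j =
          (if j ∈ J then 0 else p j + ∑ i ∈ J.filter (fun i => jsel i = j), p i)) ∧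
        ∑ i, ∑ j, c i j * η i j = ∑ i ∈ J, p i * Jᶜ.inf' hJc (fun j => c i j)) := by
  classical
  set L : Fin N → ℝ := fun i => Jᶜ.inf' hJc (fun j => c i j) with hLdef
  have hLc : ∀ i ∈ J, L i = c i (jsel i) := fun i hi =>
    le_antisymm (Finset.inf'_le _ (hjsel i hi).1) (Finset.le_inf' _ _ (hjsel i hi).2)
  have hL0 : ∀ i, 0 ≤ L i := fun i => Finset.le_inf' _ _ (fun j _ => hc0 i j)
  -- construction
  set η : Fin N → Fin N → ℝ := fun i j =>
    if i ∈ J then (if j = jsel i then p i else 0) else (if j = i then p i else 0) with hηdef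
  have hη0 : ∀ i j, 0 ≤ η i j := by
    intro i j; simp only [hηdef]
    split <;> split <;> simp [hp i]
  have hrow : ∀ i, ∑ j, η i j = p i := by
    intro i; simp only [hηdef]
    split <;> simp
  have hcol : ∀ j, ∑ i, η i j =
      if j ∈ J then 0 else p j + ∑ i ∈ J.filter (fun i => jsel i = j), p i := by
    intro j
    simp only [hηdef]
    rw [Finset.sum_ite]
    have h1 : Finset.univ.filter (· ∈ J) = J := by ext i; simp
    have h2 : Finset.univ.filter (¬ · ∈ J) = Jᶜ := by ext i; simp
    rw [h1, h2, Finset.sum_ite_eq Jᶜ j p]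
    by_cases hj : j ∈ J
    · have : ∑ i ∈ J, (if j = jsel i then p i else 0) = 0 := by
        apply Finset.sum_eq_zero
        intro i hi
        have : jsel i ∈ Jᶜ := (hjsel i hi).1
        rw [if_neg]
        rintro rfl
        exact (Finset.mem_compl.mp this) hj
      simp [hj, this]
    · have : ∑ i ∈ J, (if j = jsel i then p i else 0)
          = ∑ i ∈ J.filter (fun i => jsel i = j), p i := by
        rw [Finset.sum_filter]
        exact Finset.sum_congr rfl (fun i _ => if_congr eq_comm rfl rfl)
      simp [hj, this, add_comm]
  have hcost : ∑ i, ∑ j, c i j * η i j = ∑ i ∈ J, p i * L i := by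
    have hinner : ∀ i, ∑ j, c i j * η i j = if i ∈ J then p i * L i else 0 := by
      intro i
      simp only [hηdef]
      by_cases hi : i ∈ J
      · simp only [hi, if_true, mul_ite, mul_zero]
        rw [Finset.sum_ite_eq' Finset.univ (jsel i) (fun j => c i j * p i)]
        simp [hLc i hi, mul_comm]
      · simp only [hi, if_false, mul_ite, mul_zero]
        rw [Finset.sum_ite_eq' Finset.univ i (fun j => c i j * p i)]
        simp [hdiag i]
    rw [Finset.sum_congr rfl (fun i _ => hinner i), Finset.sum_ite_mem,
      Finset.univ_inter]
  constructor
  · constructor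
    · refine ⟨fun j => if j ∈ J then 0 else p j + ∑ i ∈ J.filter (fun i => jsel i = j), p i,
        η, fun j hj => by simp [hj], ?_, ?_, hη0, hrow, hcol, hcost.symm⟩
      · intro j
        dsimp only
        split
        · exact le_refl 0
        · exact add_nonneg (hp j) (Finset.sum_nonneg fun i _ => hp i)
      · rw [← Finset.sum_congr rfl (fun j _ => (hcol j))]
        rw [Finset.sum_comm]
        rw [Finset.sum_congr rfl (fun i (_ : i ∈ Finset.univ) => hrow i)]
        exact hp1
    · rintro t ⟨q, η', hq0, hqn, hq1, hη'0, hrow', hcol', rfl⟩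
      have hzero : ∀ i, ∀ j ∈ J, η' i j = 0 := by
        intro i j hj
        have h := hcol' j
        rw [hq0 j hj] at h
        exact (Finset.sum_eq_zero_iff_of_nonneg (fun k _ => hη'0 k j)).mp h i (Finset.mem_univ i)
      have key : ∀ i ∈ J, p i * L i ≤ ∑ j, c i j * η' i j := by
        intro i hi
        have hsplit : ∑ j ∈ Jᶜ, η' i j = p i := by
          have := Finset.sum_add_sum_compl J (fun j => η' i j)
          rw [Finset.sum_eq_zero (fun j hj => hzero i j hj), zero_add, hrow' i] at this
          exact this
        calc p i * L i = ∑ j ∈ Jᶜ, L i * η' i j := by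
              rw [← Finset.mul_sum, hsplit, mul_comm]
          _ ≤ ∑ j ∈ Jᶜ, c i j * η' i j := by
              apply Finset.sum_le_sum
              intro j hj
              exact mul_le_mul_of_nonneg_right (Finset.inf'_le _ hj) (hη'0 i j)
          _ ≤ ∑ j, c i j * η' i j := by
              apply Finset.sum_le_sum_of_subset_of_nonneg (Finset.subset_univ _)
              intro j _ _
              exact mul_nonneg (hc0 i j) (hη'0 i j)
      calc ∑ i ∈ J, p i * L i ≤ ∑ i ∈ J, ∑ j, c i j * η' i j :=
            Finset.sum_le_sum key
        _ ≤ ∑ i, ∑ j, c i j * η' i j := by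
            apply Finset.sum_le_sum_of_subset_of_nonneg (Finset.subset_univ _)
            intro i _ _
            exact Finset.sum_nonneg fun j _ => mul_nonneg (hc0 i j) (hη'0 i j)
  · exact ⟨η, hη0, hrow, hcol, hcost⟩
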